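/- Let ℓ be an odd prime. The set of indices [N_s(ℓ) : G] over subgroups G of N_s(ℓ) that belong to the split Cartan C_s(ℓ) equals the set of positive integers divisible by 2 and dividing 2(ℓ−1)²/q for some prime q dividing ℓ−1. -/

import Mathlib

open Matrix

abbrev GL2 (ℓ : ℕ) : Type := GL (Fin 2) (ZMod ℓ)

namespace Paper

/-- The underlying matrix of an element of `GL₂(ℤ/ℓℤ)`. -/
def mat {ℓ : ℕ} (g : GL2 ℓ) : Matrix (Fin 2) (Fin 2) (ZMod ℓ) := ↑g

/-- The set of scalar matrices `Z(ℓ)`. -/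
def ZSet (ℓ : ℕ) : Set (GL2 ℓ) :=
  { g | ∃ x : ZMod ℓ, mat g = x • (1 : Matrix (Fin 2) (Fin 2) (ZMod ℓ)) }

/-- The split Cartan `C_s(ℓ)`: invertible diagonal matrices. -/
def CsSet (ℓ : ℕ) : Set (GL2 ℓ) := { g | mat g 0 1 = 0 ∧ mat g 1 0 = 0 }

/-- The normalizer `N_s(ℓ)` of the split Cartan: diagonal and antidiagonal matrices. -/
def NsSet (ℓ : ℕ) : Set (GL2 ℓ) :=
  CsSet ℓ ∪ { g | mat g 0 0 = 0 ∧ mat g 1 1 = 0 }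

/-- The nonsplit Cartan `C_ns(ℓ)` relative to the nonsquare `ε`. -/
def CnsSet (ℓ : ℕ) (ε : ZMod ℓ) : Set (GL2 ℓ) :=
  { g | ∃ x y : ZMod ℓ, mat g = !![x, ε * y; y, x] }

/-- The normalizer `N_ns(ℓ)` of the nonsplit Cartan. -/
def NnsSet (ℓ : ℕ) (ε : ZMod ℓ) : Set (GL2 ℓ) :=
  CnsSet ℓ ε ∪ { g | ∃ x y : ZMod ℓ, mat g = !![x, -(ε * y); y, -x] }

/-- The ramified Cartan `C_r(ℓ)`. -/
def CrSet (ℓ : ℕ) : Set (GL2 ℓ) :=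
  { g | mat g 1 0 = 0 ∧ mat g 0 0 = mat g 1 1 }

/-- The Borel subgroup `B(ℓ)`: upper triangular matrices. -/
def BorelSet (ℓ : ℕ) : Set (GL2 ℓ) := { g | mat g 1 0 = 0 }

/-- `G` is conjugate in `GL₂(ℤ/ℓℤ)` to a subgroup of the set `M`. -/
def ConjSub {ℓ : ℕ} (G : Subgroup (GL2 ℓ)) (M : Set (GL2 ℓ)) : Prop :=
  ∃ a : GL2 ℓ, ∀ g ∈ G, a * g * a⁻¹ ∈ M

/-- `G` belongs to `Z(ℓ)`. -/
def BelongsZ {ℓ : ℕ} (G : Subgroup (GL2 ℓ)) : Prop := ConjSub G (ZSet ℓ)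

/-- `G` belongs to `C_s(ℓ)`. -/
def BelongsCs {ℓ : ℕ} (G : Subgroup (GL2 ℓ)) : Prop :=
  ConjSub G (CsSet ℓ) ∧ ¬ ConjSub G (ZSet ℓ)

/-- `G` belongs to `C_ns(ℓ)`. -/
def BelongsCns {ℓ : ℕ} (ε : ZMod ℓ) (G : Subgroup (GL2 ℓ)) : Prop :=
  ConjSub G (CnsSet ℓ ε) ∧ ¬ ConjSub G (ZSet ℓ)

/-- `G` belongs to `N_s(ℓ)`. -/
def BelongsNs {ℓ : ℕ} (G : Subgroup (GL2 ℓ)) : Prop :=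
  ConjSub G (NsSet ℓ) ∧ ¬ ConjSub G (CsSet ℓ)

/-- `G` belongs to `N_ns(ℓ)`. -/
def BelongsNns {ℓ : ℕ} (ε : ZMod ℓ) (G : Subgroup (GL2 ℓ)) : Prop :=
  ConjSub G (NnsSet ℓ ε) ∧ ¬ ConjSub G (CnsSet ℓ ε)

/-- `G` belongs to the ramified Cartan `C_r(ℓ)`. -/
def BelongsCr {ℓ : ℕ} (G : Subgroup (GL2 ℓ)) : Prop :=
  ConjSub G (CrSet ℓ) ∧ ¬ ConjSub G (ZSet ℓ)

/-- `H` is a twist of `G`: either `H = ⟨G, -I⟩`, or `H` is an index-2 subgroup of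
`⟨G, -I⟩` not containing `-I`. -/
def TwistOf {ℓ : ℕ} (G H : Subgroup (GL2 ℓ)) : Prop :=
  H = G ⊔ Subgroup.closure {(-1 : GL2 ℓ)} ∨
    (H ≤ G ⊔ Subgroup.closure {(-1 : GL2 ℓ)} ∧
      H.relIndex (G ⊔ Subgroup.closure {(-1 : GL2 ℓ)}) = 2 ∧
      (-1 : GL2 ℓ) ∉ H)

/-- `H` fixes a nonzero vector of `(ℤ/ℓℤ)²`. -/
def FixesVec {ℓ : ℕ} (H : Subgroup (GL2 ℓ)) : Prop :=
  ∃ v : Fin 2 → ZMod ℓ, v ≠ 0 ∧ ∀ h ∈ H, Matrix.mulVec (mat h) v = v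

end Paper

namespace Aux

variable {ℓ : ℕ} [Fact ℓ.Prime]

def diagU (x y : (ZMod ℓ)ˣ) : GL2 ℓ :=
  ⟨!![(x : ZMod ℓ), 0; 0, (y : ZMod ℓ)],
   !![((x⁻¹ : (ZMod ℓ)ˣ) : ZMod ℓ), 0; 0, ((y⁻¹ : (ZMod ℓ)ˣ) : ZMod ℓ)],
   by rw [Matrix.mul_fin_two, Matrix.one_fin_two]
      norm_num [Units.mul_inv, -Units.val_inv_eq_inv_val],
   by rw [Matrix.mul_fin_two, Matrix.one_fin_two]
      norm_num [Units.inv_mul, -Units.val_inv_eq_inv_val]⟩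

def antidiagU (x y : (ZMod ℓ)ˣ) : GL2 ℓ :=
  ⟨!![0, (x : ZMod ℓ); (y : ZMod ℓ), 0],
   !![0, ((y⁻¹ : (ZMod ℓ)ˣ) : ZMod ℓ); ((x⁻¹ : (ZMod ℓ)ˣ) : ZMod ℓ), 0],
   by rw [Matrix.mul_fin_two, Matrix.one_fin_two]
      norm_num [Units.mul_inv, -Units.val_inv_eq_inv_val],
   by rw [Matrix.mul_fin_two, Matrix.one_fin_two]
      norm_num [Units.inv_mul, -Units.val_inv_eq_inv_val]⟩

lemma mat_diagU (x y : (ZMod ℓ)ˣ) :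
    Paper.mat (diagU x y) = !![(x : ZMod ℓ), 0; 0, (y : ZMod ℓ)] := rfl

lemma mat_antidiagU (x y : (ZMod ℓ)ˣ) :
    Paper.mat (antidiagU x y) = !![0, (x : ZMod ℓ); (y : ZMod ℓ), 0] := rfl

def diagF : (ZMod ℓ)ˣ × (ZMod ℓ)ˣ → GL2 ℓ := fun p => diagU p.1 p.2

def antidiagF : (ZMod ℓ)ˣ × (ZMod ℓ)ˣ → GL2 ℓ := fun p => antidiagU p.1 p.2

def diagHom : (ZMod ℓ)ˣ × (ZMod ℓ)ˣ →* GL2 ℓ where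
  toFun := diagF
  map_one' := by
    apply Units.ext
    show !![((1:(ZMod ℓ)ˣ) : ZMod ℓ), 0; 0, ((1:(ZMod ℓ)ˣ) : ZMod ℓ)] = (1 : Matrix _ _ _)
    rw [Matrix.one_fin_two]
    norm_num
  map_mul' p q := by
    apply Units.ext
    show !![((p.1*q.1 : (ZMod ℓ)ˣ) : ZMod ℓ), 0; 0, ((p.2*q.2:(ZMod ℓ)ˣ) : ZMod ℓ)]
      = !![(p.1 : ZMod ℓ), 0; 0, (p.2 : ZMod ℓ)] * !![(q.1 : ZMod ℓ), 0; 0, (q.2 : ZMod ℓ)]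
    rw [Matrix.mul_fin_two]
    norm_num

lemma diagF_injective : Function.Injective (diagF (ℓ := ℓ)) := by
  rintro ⟨x, y⟩ ⟨x', y'⟩ h
  have h2 : Paper.mat (diagU x y) = Paper.mat (diagU x' y') := by
    unfold Paper.mat; exact congrArg Units.val h
  rw [mat_diagU, mat_diagU] at h2
  have hx : (x : ZMod ℓ) = x' := by have := congrFun (congrFun h2 0) 0; simpa using this
  have hy : (y : ZMod ℓ) = y' := by have := congrFun (congrFun h2 1) 1; simpa using this
  exact Prod.ext (Units.ext hx) (Units.ext hy)

lemma antidiagF_injective : Function.Injective (antidiagF (ℓ := ℓ)) := by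
  rintro ⟨x, y⟩ ⟨x', y'⟩ h
  have h2 : Paper.mat (antidiagU x y) = Paper.mat (antidiagU x' y') := by
    unfold Paper.mat; exact congrArg Units.val h
  rw [mat_antidiagU, mat_antidiagU] at h2
  have hx : (x : ZMod ℓ) = x' := by have := congrFun (congrFun h2 0) 1; simpa using this
  have hy : (y : ZMod ℓ) = y' := by have := congrFun (congrFun h2 1) 0; simpa using this
  exact Prod.ext (Units.ext hx) (Units.ext hy)

lemma CsSet_eq_range : Paper.CsSet ℓ = Set.range (diagF (ℓ := ℓ)) := by
  ext g
  constructor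
  · rintro ⟨h01, h10⟩
    have hdet : IsUnit (Paper.mat g).det := (Matrix.isUnit_iff_isUnit_det _).mp g.isUnit
    rw [Matrix.det_fin_two, h01, h10] at hdet
    simp only [zero_mul, mul_zero, sub_zero] at hdet
    have hx : IsUnit (Paper.mat g 0 0) := isUnit_of_mul_isUnit_left hdet
    have hy : IsUnit (Paper.mat g 1 1) := isUnit_of_mul_isUnit_right hdet
    refine ⟨⟨hx.unit, hy.unit⟩, ?_⟩
    apply Units.ext
    show (diagU hx.unit hy.unit : Matrix _ _ _) = Paper.mat g
    have e01 : (↑g : Matrix (Fin 2) (Fin 2) (ZMod ℓ)) 0 1 = 0 := h01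
    have e10 : (↑g : Matrix (Fin 2) (Fin 2) (ZMod ℓ)) 1 0 = 0 := h10
    ext i j; fin_cases i <;> fin_cases j <;>
      simp [diagU, e01, e10, hx.unit_spec, hy.unit_spec, Paper.mat]
  · rintro ⟨⟨x, y⟩, rfl⟩
    exact ⟨by simp [diagF, mat_diagU], by simp [diagF, mat_diagU]⟩

lemma AntiSet_eq_range :
    { g : GL2 ℓ | Paper.mat g 0 0 = 0 ∧ Paper.mat g 1 1 = 0 }
      = Set.range (antidiagF (ℓ := ℓ)) := by
  ext g
  constructor
  · rintro ⟨h00, h11⟩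
    have hdet : IsUnit (Paper.mat g).det := (Matrix.isUnit_iff_isUnit_det _).mp g.isUnit
    rw [Matrix.det_fin_two, h00, h11] at hdet
    simp only [zero_mul, mul_zero, zero_sub, IsUnit.neg_iff] at hdet
    have hx : IsUnit (Paper.mat g 0 1) := isUnit_of_mul_isUnit_left hdet
    have hy : IsUnit (Paper.mat g 1 0) := isUnit_of_mul_isUnit_right hdet
    refine ⟨⟨hx.unit, hy.unit⟩, ?_⟩
    apply Units.ext
    show (antidiagU hx.unit hy.unit : Matrix _ _ _) = Paper.mat g
    have e00 : (↑g : Matrix (Fin 2) (Fin 2) (ZMod ℓ)) 0 0 = 0 := h00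
    have e11 : (↑g : Matrix (Fin 2) (Fin 2) (ZMod ℓ)) 1 1 = 0 := h11
    ext i j; fin_cases i <;> fin_cases j <;>
      simp [antidiagU, e00, e11, hx.unit_spec, hy.unit_spec, Paper.mat]
  · rintro ⟨⟨x, y⟩, rfl⟩
    exact ⟨by simp [antidiagF, mat_antidiagU], by simp [antidiagF, mat_antidiagU]⟩

lemma card_units_zmod : Nat.card (ZMod ℓ)ˣ = ℓ - 1 := by
  rw [Nat.card_eq_fintype_card, ZMod.card_units_eq_totient,
    Nat.totient_prime (Fact.out : ℓ.Prime)]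

lemma card_NsSet : (Paper.NsSet ℓ).ncard = 2 * (ℓ - 1) ^ 2 := by
  have hdisj : Disjoint (Paper.CsSet ℓ)
      { g : GL2 ℓ | Paper.mat g 0 0 = 0 ∧ Paper.mat g 1 1 = 0 } := by
    rw [Set.disjoint_left]
    rintro g ⟨h01, h10⟩ ⟨h00, h11⟩
    have hdet : IsUnit (Paper.mat g).det := (Matrix.isUnit_iff_isUnit_det _).mp g.isUnit
    rw [Matrix.det_fin_two, h01, h00] at hdet
    simp at hdet
  have h1 : (Paper.CsSet ℓ).ncard = (ℓ - 1) ^ 2 := by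
    rw [CsSet_eq_range, ← Nat.card_coe_set_eq,
      Nat.card_range_of_injective diagF_injective, Nat.card_prod, card_units_zmod, sq]
  have h2 : ({ g : GL2 ℓ | Paper.mat g 0 0 = 0 ∧ Paper.mat g 1 1 = 0 }).ncard = (ℓ - 1) ^ 2 := by
    rw [AntiSet_eq_range, ← Nat.card_coe_set_eq,
      Nat.card_range_of_injective antidiagF_injective, Nat.card_prod, card_units_zmod, sq]
  rw [Paper.NsSet, Set.ncard_union_eq hdisj (Set.toFinite _) (Set.toFinite _), h1, h2]
  ring

end Aux

namespace Aux

variable {ℓ : ℕ} [Fact ℓ.Prime]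

def CsSub : Subgroup (GL2 ℓ) where
  carrier := Paper.CsSet ℓ
  one_mem' := by
    constructor <;>
      · show ((1 : GL2 ℓ) : Matrix (Fin 2) (Fin 2) (ZMod ℓ)) _ _ = 0
        rw [Units.val_one]
        simp [Matrix.one_apply]
  mul_mem' := by
    rintro a b ⟨ha1, ha2⟩ ⟨hb1, hb2⟩
    have ha1' : (↑a : Matrix (Fin 2) (Fin 2) (ZMod ℓ)) 0 1 = 0 := ha1
    have ha2' : (↑a : Matrix (Fin 2) (Fin 2) (ZMod ℓ)) 1 0 = 0 := ha2
    have hb1' : (↑b : Matrix (Fin 2) (Fin 2) (ZMod ℓ)) 0 1 = 0 := hb1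
    have hb2' : (↑b : Matrix (Fin 2) (Fin 2) (ZMod ℓ)) 1 0 = 0 := hb2
    constructor
    · show (↑(a*b) : Matrix (Fin 2) (Fin 2) (ZMod ℓ)) 0 1 = 0
      rw [Units.val_mul, Matrix.mul_apply, Fin.sum_univ_two, ha1', hb1']
      ring
    · show (↑(a*b) : Matrix (Fin 2) (Fin 2) (ZMod ℓ)) 1 0 = 0
      rw [Units.val_mul, Matrix.mul_apply, Fin.sum_univ_two, ha2', hb2']
      ring
  inv_mem' := by
    rintro a ⟨ha1, ha2⟩
    have ha1' : (↑a : Matrix (Fin 2) (Fin 2) (ZMod ℓ)) 0 1 = 0 := ha1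
    have ha2' : (↑a : Matrix (Fin 2) (Fin 2) (ZMod ℓ)) 1 0 = 0 := ha2
    constructor
    · show (↑(a⁻¹) : Matrix (Fin 2) (Fin 2) (ZMod ℓ)) 0 1 = 0
      rw [Matrix.coe_units_inv, Matrix.inv_def, Matrix.adjugate_fin_two]
      simp [ha1']
    · show (↑(a⁻¹) : Matrix (Fin 2) (Fin 2) (ZMod ℓ)) 1 0 = 0
      rw [Matrix.coe_units_inv, Matrix.inv_def, Matrix.adjugate_fin_two]
      simp [ha2']

lemma card_CsSub : Nat.card (CsSub (ℓ := ℓ)) = (ℓ - 1) ^ 2 := by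
  have h0 : Nat.card (CsSub (ℓ := ℓ)) = (Paper.CsSet ℓ).ncard :=
    Nat.card_coe_set_eq (Paper.CsSet ℓ)
  rw [h0, CsSet_eq_range, ← Nat.card_coe_set_eq,
    Nat.card_range_of_injective diagF_injective, Nat.card_prod, card_units_zmod, sq]

lemma conj_mem_ZSet {a g : GL2 ℓ} (h : a * g * a⁻¹ ∈ Paper.ZSet ℓ) : g ∈ Paper.ZSet ℓ := by
  obtain ⟨x, hx⟩ := h
  refine ⟨x, ?_⟩
  have key : g = a⁻¹ * (a * g * a⁻¹) * a := by group
  have h2 : Paper.mat g = (↑(a⁻¹) : Matrix (Fin 2) (Fin 2) (ZMod ℓ)) *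
      Paper.mat (a * g * a⁻¹) * (↑a : Matrix (Fin 2) (Fin 2) (ZMod ℓ)) := by
    conv_lhs => rw [Paper.mat, key]
    rw [Units.val_mul, Units.val_mul]
    rfl
  rw [h2, hx, Matrix.mul_smul, Matrix.smul_mul, Matrix.mul_one, ← Units.val_mul,
    inv_mul_cancel, Units.val_one]

lemma one_mem_ZSet : (1 : GL2 ℓ) ∈ Paper.ZSet ℓ := by
  refine ⟨1, ?_⟩
  show ((1 : GL2 ℓ) : Matrix (Fin 2) (Fin 2) (ZMod ℓ)) = _
  rw [Units.val_one, one_smul]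

lemma exists_subgroup_card {α : Type} [Group α] [Finite α] [IsCyclic α] {d : ℕ}
    (hd : d ∣ Nat.card α) : ∃ H : Subgroup α, Nat.card H = d := by
  obtain ⟨g, hg⟩ := IsCyclic.exists_ofOrder_eq_natCard (α := α)
  refine ⟨Subgroup.zpowers (g ^ (Nat.card α / d)), ?_⟩
  rw [Nat.card_zpowers, orderOf_pow, hg]
  have hN : Nat.card α ≠ 0 := Nat.card_pos.ne'
  rw [Nat.gcd_eq_right (Nat.div_dvd_of_dvd hd), Nat.div_div_self hd hN]

lemma exists_ne_one_of_card_ne_one {α : Type} [Group α] {H : Subgroup α}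
    (h : Nat.card H ≠ 1) : ∃ x ∈ H, x ≠ 1 := by
  by_contra hc
  push_neg at hc
  exact h (Subgroup.card_eq_one.mpr ((Subgroup.eq_bot_iff_forall H).mpr hc))

lemma relindex_eq (Ns G : Subgroup (GL2 ℓ)) (hNs : (Ns : Set (GL2 ℓ)) = Paper.NsSet ℓ)
    (hle : G ≤ Ns) : G.relIndex Ns * Nat.card G = 2 * (ℓ - 1) ^ 2 := by
  have h1 : Nat.card (G.subgroupOf Ns) = Nat.card G :=
    Nat.card_congr (Subgroup.subgroupOfEquivOfLe hle).toEquiv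
  have h2 : Nat.card Ns = 2 * (ℓ - 1) ^ 2 := by
    have h3 : Nat.card Ns = ((Ns : Set (GL2 ℓ))).ncard :=
      Nat.card_coe_set_eq (Ns : Set (GL2 ℓ))
    rw [h3, hNs, card_NsSet]
  calc G.relIndex Ns * Nat.card G
      = Nat.card (G.subgroupOf Ns) * (G.subgroupOf Ns).index := by rw [h1, mul_comm]; rfl
    _ = Nat.card Ns := Subgroup.card_mul_index _
    _ = 2 * (ℓ - 1) ^ 2 := h2

end Aux

namespace Aux

variable {ℓ : ℕ} [Fact ℓ.Prime]

lemma diagHom_apply (p : (ZMod ℓ)ˣ × (ZMod ℓ)ˣ) : diagHom p = diagU p.1 p.2 := rfl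

lemma diagU_mem_CsSet (x y : (ZMod ℓ)ˣ) : diagU x y ∈ Paper.CsSet ℓ :=
  ⟨by rw [mat_diagU]; simp, by rw [mat_diagU]; simp⟩

end Aux


theorem statement_9 (ℓ : ℕ) (hℓ : Nat.Prime ℓ) (hodd : Odd ℓ)
    (Ns : Subgroup (GL2 ℓ)) (hNs : (Ns : Set (GL2 ℓ)) = Paper.NsSet ℓ) :
    { n : ℕ | ∃ G : Subgroup (GL2 ℓ), G ≤ Ns ∧ Paper.BelongsCs G ∧ G.relIndex Ns = n } =
      { n : ℕ | 0 < n ∧ 2 ∣ n ∧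
        ∃ q : ℕ, q.Prime ∧ q ∣ (ℓ - 1) ∧ n ∣ 2 * (ℓ - 1) ^ 2 / q } := by
  haveI : Fact ℓ.Prime := ⟨hℓ⟩
  have hl1 : 0 < ℓ - 1 := by have := hℓ.two_le; omega
  have hN0 : 0 < 2 * (ℓ - 1) ^ 2 := by positivity
  ext n
  simp only [Set.mem_setOf_eq]
  constructor
  · rintro ⟨G, hle, ⟨⟨a, ha⟩, hnZ⟩, rfl⟩
    set m := Nat.card G with hm
    have hinj : Function.Injective ⇑(MulAut.conj a).toMonoidHom := (MulAut.conj a).injective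
    have hGle : Subgroup.map (MulAut.conj a).toMonoidHom G ≤ Aux.CsSub (ℓ := ℓ) := by
      intro x hx
      rw [Subgroup.mem_map] at hx
      obtain ⟨g, hg, rfl⟩ := hx
      have h1 : ((MulAut.conj a).toMonoidHom g) = a * g * a⁻¹ := rfl
      rw [h1]
      exact ha g hg
    have hcardmap : Nat.card (Subgroup.map (MulAut.conj a).toMonoidHom G) = m :=
      (Nat.card_congr (Subgroup.equivMapOfInjective G _ hinj).toEquiv).symm
    have hmdvd : m ∣ (ℓ - 1) ^ 2 := by
      rw [← hcardmap, ← Aux.card_CsSub (ℓ := ℓ)]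
      exact Subgroup.card_dvd_of_le hGle
    have hm1 : m ≠ 1 := by
      intro h1
      refine hnZ ⟨1, fun g hg => ?_⟩
      have hbot : G = ⊥ := Subgroup.card_eq_one.mp h1
      have hg1 : g = 1 := by rwa [hbot, Subgroup.mem_bot] at hg
      have e : (1 : GL2 ℓ) * g * 1⁻¹ = 1 := by rw [hg1]; group
      rw [e]
      exact Aux.one_mem_ZSet
    have hm0 : 0 < m := Nat.card_pos
    have key := Aux.relindex_eq Ns G hNs hle
    rw [← hm] at key
    obtain ⟨t, ht⟩ := hmdvd
    have hmdvd2 : m ∣ (ℓ - 1) ^ 2 := ⟨t, ht⟩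
    refine ⟨?_, ⟨t, ?_⟩, ?_⟩
    · rcases Nat.eq_zero_or_pos (G.relIndex Ns) with h0 | h0
      · rw [h0, zero_mul] at key; omega
      · exact h0
    · have h2 : G.relIndex Ns * m = (2 * t) * m := by rw [key, ht]; ring
      exact Nat.eq_of_mul_eq_mul_right hm0 h2
    · obtain ⟨q, hq, hqm⟩ := Nat.exists_prime_and_dvd hm1
      have hql : q ∣ ℓ - 1 := by
        have h3 : q ∣ (ℓ - 1) * (ℓ - 1) := by
          rw [← sq]; exact hqm.trans hmdvd2
        exact ((Nat.Prime.dvd_mul hq).mp h3).elim id id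
      obtain ⟨k, hk⟩ := hqm
      refine ⟨q, hq, hql, k, ?_⟩
      have h4 : 2 * (ℓ - 1) ^ 2 = q * (G.relIndex Ns * k) := by rw [← key, hk]; ring
      rw [h4, Nat.mul_div_cancel_left _ hq.pos]
  · rintro ⟨hn0, ⟨t, hnt⟩, q, hq, hqd, hnd⟩
    have hqN : q ∣ 2 * (ℓ - 1) ^ 2 :=
      (hqd.trans (dvd_pow_self (ℓ - 1) two_ne_zero)).mul_left 2
    have hnN : n ∣ 2 * (ℓ - 1) ^ 2 := hnd.trans (Nat.div_dvd_of_dvd hqN)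
    set m := 2 * (ℓ - 1) ^ 2 / n with hm
    have hmn : n * m = 2 * (ℓ - 1) ^ 2 := Nat.mul_div_cancel' hnN
    have hqm : q ∣ m := by
      obtain ⟨k, hk⟩ := hnd
      have h5 : 2 * (ℓ - 1) ^ 2 = n * (q * k) := by
        have h6 : 2 * (ℓ - 1) ^ 2 / q * q = 2 * (ℓ - 1) ^ 2 := Nat.div_mul_cancel hqN
        rw [← h6, hk]; ring
      have h7 : n * m = n * (q * k) := by rw [hmn, h5]
      exact ⟨k, Nat.eq_of_mul_eq_mul_left hn0 h7⟩
    have hmd : m ∣ (ℓ - 1) ^ 2 := by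
      have ht0 : 0 < t := by omega
      refine ⟨t, ?_⟩
      have h8 : 2 * ((ℓ - 1) ^ 2) = 2 * (m * t) := by rw [← hmn, hnt]; ring
      exact Nat.eq_of_mul_eq_mul_left (by norm_num) h8
    have hm1 : m ≠ 1 := by
      intro h
      exact hq.ne_one (Nat.dvd_one.mp (h ▸ hqm))
    have hmd2 : m ∣ (ℓ - 1) * (ℓ - 1) := by rw [← sq]; exact hmd
    obtain ⟨m₁, m₂, h1, h2, h12⟩ := Nat.dvd_mul.mp hmd2
    haveI : NeZero ℓ := ⟨hℓ.pos.ne'⟩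
    obtain ⟨H₁, hH₁⟩ := Aux.exists_subgroup_card (α := (ZMod ℓ)ˣ) (d := m₁)
      (by rw [Aux.card_units_zmod]; exact h1)
    obtain ⟨H₂, hH₂⟩ := Aux.exists_subgroup_card (α := (ZMod ℓ)ˣ) (d := m₂)
      (by rw [Aux.card_units_zmod]; exact h2)
    set G := Subgroup.map (Aux.diagHom (ℓ := ℓ)) (H₁.prod H₂) with hG
    have hcardG : Nat.card G = m := by
      calc Nat.card G = Nat.card (H₁.prod H₂) :=
            (Nat.card_congr (Subgroup.equivMapOfInjective _ Aux.diagHom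
              Aux.diagF_injective).toEquiv).symm
        _ = Nat.card H₁ * Nat.card H₂ := by
            rw [Nat.card_congr (Subgroup.prodEquiv H₁ H₂).toEquiv, Nat.card_prod]
        _ = m := by rw [hH₁, hH₂, h12]
    have hGle : G ≤ Ns := by
      intro x hx
      rw [hG, Subgroup.mem_map] at hx
      obtain ⟨⟨u, v⟩, -, rfl⟩ := hx
      rw [← SetLike.mem_coe, hNs]
      exact Or.inl (Aux.diagU_mem_CsSet u v)
    have hmpos : 0 < m := by
      rcases Nat.eq_zero_or_pos m with h0 | h0
      · rw [h0, mul_zero] at hmn; omega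
      · exact h0
    refine ⟨G, hGle, ⟨⟨1, ?_⟩, ?_⟩, ?_⟩
    · intro g hg
      rw [hG, Subgroup.mem_map] at hg
      obtain ⟨⟨u, v⟩, -, rfl⟩ := hg
      have e : (1 : GL2 ℓ) * Aux.diagHom (u, v) * 1⁻¹ = Aux.diagHom (u, v) := by group
      rw [e]
      exact Aux.diagU_mem_CsSet u v
    · rintro ⟨a, ha⟩
      have hcases : m₁ ≠ 1 ∨ m₂ ≠ 1 := by
        by_contra hc
        push_neg at hc
        rw [hc.1, hc.2, mul_one] at h12
        exact hm1 h12.symm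
      obtain hc | hc := hcases
      · obtain ⟨u, hu, hune⟩ := Aux.exists_ne_one_of_card_ne_one (H := H₁)
          (by rw [hH₁]; exact hc)
        have hmem : Aux.diagHom (ℓ := ℓ) (u, 1) ∈ G :=
          Subgroup.mem_map.mpr ⟨(u, 1), Subgroup.mem_prod.mpr ⟨hu, one_mem _⟩, rfl⟩
        obtain ⟨x, hx⟩ := Aux.conj_mem_ZSet (ha _ hmem)
        have hx' : !![((u : (ZMod ℓ)ˣ) : ZMod ℓ), 0; 0, ((1 : (ZMod ℓ)ˣ) : ZMod ℓ)]
            = x • (1 : Matrix (Fin 2) (Fin 2) (ZMod ℓ)) := hx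
        have e00 : ((u : (ZMod ℓ)ˣ) : ZMod ℓ) = x := by
          have := congrFun (congrFun hx' 0) 0; simpa using this
        have e11 : (1 : ZMod ℓ) = x := by
          have := congrFun (congrFun hx' 1) 1; simpa using this
        exact hune (Units.ext (by rw [Units.val_one, e00, ← e11]))
      · obtain ⟨v, hv, hvne⟩ := Aux.exists_ne_one_of_card_ne_one (H := H₂)
          (by rw [hH₂]; exact hc)
        have hmem : Aux.diagHom (ℓ := ℓ) (1, v) ∈ G :=
          Subgroup.mem_map.mpr ⟨(1, v), Subgroup.mem_prod.mpr ⟨one_mem _, hv⟩, rfl⟩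
        obtain ⟨x, hx⟩ := Aux.conj_mem_ZSet (ha _ hmem)
        have hx' : !![((1 : (ZMod ℓ)ˣ) : ZMod ℓ), 0; 0, ((v : (ZMod ℓ)ˣ) : ZMod ℓ)]
            = x • (1 : Matrix (Fin 2) (Fin 2) (ZMod ℓ)) := hx
        have e00 : (1 : ZMod ℓ) = x := by
          have := congrFun (congrFun hx' 0) 0; simpa using this
        have e11 : ((v : (ZMod ℓ)ˣ) : ZMod ℓ) = x := by
          have := congrFun (congrFun hx' 1) 1; simpa using this
        exact hvne (Units.ext (by rw [Units.val_one, e11, ← e00]))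
    · have key := Aux.relindex_eq Ns G hNs hGle
      rw [hcardG] at key
      exact Nat.eq_of_mul_eq_mul_right hmpos (key.trans hmn.symm)
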